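/- If Q and Q′ are linearly independent quadratic forms in R₂, then either every nonzero element of kQ + kQ′ has rank at most two, or the set of one-dimensional k-subspaces of kQ + kQ′ that are spanned by a form of rank at most two has at most three elements. ([SV], Lemma 2.3, first assertion.) -/

import Mathlib

noncomputable section

open MvPolynomial

/-- The quadratic form `xᵀNx` associated to a 4×4 matrix `N`. -/
def quadOfMat (k : Type*) [Field k] (N : Matrix (Fin 4) (Fin 4) k) :
    MvPolynomial (Fin 4) k :=
  ∑ i, ∑ j, N i j • (X i * X j)

/-- `q` has rank exactly `r`: the (unique, as char k ≠ 2) symmetric matrix `N`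
with `q = xᵀNx` has rank `r`. -/
def HasRank (k : Type*) [Field k] (q : MvPolynomial (Fin 4) k) (r : ℕ) : Prop :=
  ∃ N : Matrix (Fin 4) (Fin 4) k, N.IsSymm ∧ q = quadOfMat k N ∧ N.rank = r

/-- `q` has rank at most `r`. -/
def HasRankLE (k : Type*) [Field k] (q : MvPolynomial (Fin 4) k) (r : ℕ) : Prop :=
  ∃ N : Matrix (Fin 4) (Fin 4) k, N.IsSymm ∧ q = quadOfMat k N ∧ N.rank ≤ r

section Aux

open Matrix

variable {k : Type*} [Field k]

lemma quadOfMat_add (M N : Matrix (Fin 4) (Fin 4) k) :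
    quadOfMat k (M + N) = quadOfMat k M + quadOfMat k N := by
  simp [quadOfMat, add_smul, Finset.sum_add_distrib]

lemma quadOfMat_smul (a : k) (M : Matrix (Fin 4) (Fin 4) k) :
    quadOfMat k (a • M) = a • quadOfMat k M := by
  simp [quadOfMat, Finset.smul_sum, smul_smul]

lemma quadOfMat_eval (N : Matrix (Fin 4) (Fin 4) k) (v : Fin 4 → k) :
    eval v (quadOfMat k N) = ∑ i, ∑ j, N i j * (v i * v j) := by
  simp [quadOfMat, smul_eq_C_mul]

lemma sum_single (N : Matrix (Fin 4) (Fin 4) k) (i : Fin 4) :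
    ∑ a, ∑ b, N a b * ((Pi.single i 1 : Fin 4 → k) a * (Pi.single i 1 : Fin 4 → k) b) = N i i := by
  simp [Pi.single_apply, mul_ite, ite_mul, Finset.sum_ite_eq', Finset.sum_ite_eq]

lemma sum_single2 (N : Matrix (Fin 4) (Fin 4) k) (i j : Fin 4) :
    ∑ a, ∑ b, N a b * (((Pi.single i 1 + Pi.single j 1) : Fin 4 → k) a *
        ((Pi.single i 1 + Pi.single j 1) : Fin 4 → k) b)
      = N i i + N i j + N j i + N j j := by
  simp only [Pi.add_apply, Pi.single_apply, mul_add, add_mul, mul_ite, ite_mul, mul_one, mul_zero,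
    one_mul, zero_mul, Finset.sum_add_distrib, Finset.sum_ite_eq', Finset.mem_univ, if_true]
  ring

lemma quadOfMat_inj (hchar : (2:k) ≠ 0) {M N : Matrix (Fin 4) (Fin 4) k}
    (hM : M.IsSymm) (hN : N.IsSymm) (h : quadOfMat k M = quadOfMat k N) : M = N := by
  have hv : ∀ v : Fin 4 → k, ∑ a, ∑ b, M a b * (v a * v b) = ∑ a, ∑ b, N a b * (v a * v b) := by
    intro v
    rw [← quadOfMat_eval, ← quadOfMat_eval, h]
  ext i j
  rcases eq_or_ne i j with rfl | hij
  · have := hv (Pi.single i 1)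
    rwa [sum_single, sum_single] at this
  · have h2 := hv ((Pi.single i 1) + Pi.single j 1)
    rw [sum_single2 M i j, sum_single2 N i j] at h2
    have hii := hv (Pi.single i 1)
    rw [sum_single, sum_single] at hii
    have hjj := hv (Pi.single j 1)
    rw [sum_single, sum_single] at hjj
    have hMs : M j i = M i j := hM.apply i j
    have hNs : N j i = N i j := hN.apply i j
    have h2' : 2 * M i j = 2 * N i j := by
      linear_combination h2 - hii - hjj - hMs + hNs
    exact mul_left_cancel₀ hchar h2'

lemma pick_indep {V : Type*} [AddCommGroup V] [Module k V] [FiniteDimensional k V]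
    {ι : Type*} (f : ι → V) (n : ℕ)
    (h : n ≤ Module.finrank k (Submodule.span k (Set.range f))) :
    ∃ c : Fin n → ι, LinearIndependent k (f ∘ c) := by
  obtain ⟨b, hbsub, hbspan, hbind⟩ := exists_linearIndependent k (Set.range f)
  have hfin : b.Finite := hbind.setFinite
  haveI : Fintype b := hfin.fintype
  have hcard : Module.finrank k (Submodule.span k b) = b.toFinset.card := by
    rw [finrank_span_set_eq_card hbind]
  have hn : n ≤ b.toFinset.card := by
    rw [← hcard, hbspan]; exact h
  obtain ⟨g⟩ : Nonempty (Fin n ↪ b) := by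
    rw [← Fintype.card_fin n] at hn
    apply Function.Embedding.nonempty_of_card_le
    simpa [Set.toFinset_card] using hn
  choose c hc using fun i : Fin n => hbsub (g i).2
  refine ⟨c, ?_⟩
  have hfc : f ∘ c = fun i => ((g i : b) : V) := by
    funext i; simp [Function.comp, hc]
  rw [hfc]
  exact hbind.comp (fun i => g i) g.injective

lemma rank_sub_col_le {m n n' : Type*} [Fintype m] [Fintype n] [Fintype n']
    (A : Matrix m n k) (c : n' → n) :
    (A.submatrix id c).rank ≤ A.rank := by
  rw [Matrix.rank_eq_finrank_span_cols, Matrix.rank_eq_finrank_span_cols]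
  apply Submodule.finrank_mono
  apply Submodule.span_mono
  rintro x ⟨i, rfl⟩
  exact ⟨c i, rfl⟩

lemma rank_sub_row_le {m m' n : Type*} [Fintype m] [Fintype n] [Fintype m']
    (A : Matrix m n k) (r : m' → m) :
    (A.submatrix r id).rank ≤ A.rank := by
  rw [Matrix.rank_eq_finrank_span_row, Matrix.rank_eq_finrank_span_row]
  apply Submodule.finrank_mono
  apply Submodule.span_mono
  rintro x ⟨i, rfl⟩
  exact ⟨r i, rfl⟩

lemma minor_zero_of_rank_le {A : Matrix (Fin 4) (Fin 4) k} (h : A.rank ≤ 2)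
    (r c : Fin 3 → Fin 4) : (A.submatrix r c).det = 0 := by
  by_contra hd
  have hu : IsUnit (A.submatrix r c) := (Matrix.isUnit_iff_isUnit_det _).mpr (Ne.isUnit hd)
  have h3 : (A.submatrix r c).rank = 3 := by
    rw [Matrix.rank_of_isUnit _ hu, Fintype.card_fin]
  have e1 : A.submatrix r c = (A.submatrix id c).submatrix r id := by
    simp [Matrix.submatrix_submatrix]
  have hle : (A.submatrix r c).rank ≤ 2 := by
    rw [e1]
    exact le_trans (rank_sub_row_le _ r) (le_trans (rank_sub_col_le A c) h)
  omega

lemma exists_minor {A : Matrix (Fin 4) (Fin 4) k} (h : 3 ≤ A.rank) :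
    ∃ r c : Fin 3 → Fin 4, (A.submatrix r c).det ≠ 0 := by
  obtain ⟨c, hc⟩ : ∃ c : Fin 3 → Fin 4, LinearIndependent k (Aᵀ ∘ c) := by
    apply pick_indep (f := (Aᵀ : Matrix (Fin 4) (Fin 4) k))
    have hr := Matrix.rank_eq_finrank_span_cols A
    rw [hr] at h
    exact h
  set B : Matrix (Fin 4) (Fin 3) k := A.submatrix id c with hB
  have hrB : B.rank = 3 := by
    rw [← Matrix.rank_transpose]
    have e : Bᵀ = (Aᵀ ∘ c : Fin 3 → Fin 4 → k) := by
      ext i j; simp [hB]; rfl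
    rw [e]
    exact (LinearIndependent.rank_matrix (M := (Aᵀ ∘ c : Matrix (Fin 3) (Fin 4) k)) hc).trans
      (Fintype.card_fin 3)
  obtain ⟨r, hr⟩ : ∃ r : Fin 3 → Fin 4, LinearIndependent k ((B : Fin 4 → Fin 3 → k) ∘ r) := by
    apply pick_indep (f := (B : Fin 4 → Fin 3 → k))
    have hr := Matrix.rank_eq_finrank_span_row B
    rw [hrB] at hr
    exact hr.le
  refine ⟨r, c, ?_⟩
  have hrows : LinearIndependent k (fun i => (A.submatrix r c) i) := by
    have e2 : (fun i => (A.submatrix r c) i) = (B : Fin 4 → Fin 3 → k) ∘ r := by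
      ext i j; simp [hB]; rfl
    rw [e2]; exact hr
  have hu := Matrix.linearIndependent_rows_iff_isUnit.mp hrows
  exact ((Matrix.isUnit_iff_isUnit_det _).mp hu).ne_zero

lemma roots_finite_card {P : Polynomial k} (hP : P ≠ 0) {n : ℕ} (hd : P.natDegree ≤ n) :
    {t : k | P.eval t = 0}.Finite ∧ {t : k | P.eval t = 0}.ncard ≤ n := by
  classical
  have hsub : {t : k | P.eval t = 0} ⊆ ↑P.roots.toFinset := by
    intro t ht
    simp only [Multiset.mem_toFinset, Finset.coe_sort_coe, Finset.mem_coe]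
    rw [Polynomial.mem_roots hP]
    exact ht
  have hfin : {t : k | P.eval t = 0}.Finite :=
    Set.Finite.subset (P.roots.toFinset : Finset k).finite_toSet hsub
  refine ⟨hfin, ?_⟩
  calc {t : k | P.eval t = 0}.ncard ≤ (↑P.roots.toFinset : Set k).ncard :=
        Set.ncard_le_ncard hsub (P.roots.toFinset : Finset k).finite_toSet
    _ = P.roots.toFinset.card := Set.ncard_coe_finset _
    _ ≤ Multiset.card P.roots := Multiset.toFinset_card_le _
    _ ≤ P.natDegree := Polynomial.card_roots' P
    _ ≤ n := hd

def cub0 (A B : Matrix (Fin 3) (Fin 3) k) : k :=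
  A 0 0 * A 1 1 * A 2 2 - A 0 0 * A 1 2 * A 2 1 - A 0 1 * A 1 0 * A 2 2 + A 0 1 * A 1 2 * A 2 0 + A 0 2 * A 1 0 * A 2 1 - A 0 2 * A 1 1 * A 2 0

def cub1 (A B : Matrix (Fin 3) (Fin 3) k) : k :=
  B 0 0 * A 1 1 * A 2 2 + A 0 0 * B 1 1 * A 2 2 + A 0 0 * A 1 1 * B 2 2 - B 0 0 * A 1 2 * A 2 1 - A 0 0 * B 1 2 * A 2 1 - A 0 0 * A 1 2 * B 2 1 - B 0 1 * A 1 0 * A 2 2 - A 0 1 * B 1 0 * A 2 2 - A 0 1 * A 1 0 * B 2 2 + B 0 1 * A 1 2 * A 2 0 + A 0 1 * B 1 2 * A 2 0 + A 0 1 * A 1 2 * B 2 0 + B 0 2 * A 1 0 * A 2 1 + A 0 2 * B 1 0 * A 2 1 + A 0 2 * A 1 0 * B 2 1 - B 0 2 * A 1 1 * A 2 0 - A 0 2 * B 1 1 * A 2 0 - A 0 2 * A 1 1 * B 2 0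

def cub2 (A B : Matrix (Fin 3) (Fin 3) k) : k :=
  B 0 0 * B 1 1 * A 2 2 + B 0 0 * A 1 1 * B 2 2 + A 0 0 * B 1 1 * B 2 2 - B 0 0 * B 1 2 * A 2 1 - B 0 0 * A 1 2 * B 2 1 - A 0 0 * B 1 2 * B 2 1 - B 0 1 * B 1 0 * A 2 2 - B 0 1 * A 1 0 * B 2 2 - A 0 1 * B 1 0 * B 2 2 + B 0 1 * B 1 2 * A 2 0 + B 0 1 * A 1 2 * B 2 0 + A 0 1 * B 1 2 * B 2 0 + B 0 2 * B 1 0 * A 2 1 + B 0 2 * A 1 0 * B 2 1 + A 0 2 * B 1 0 * B 2 1 - B 0 2 * B 1 1 * A 2 0 - B 0 2 * A 1 1 * B 2 0 - A 0 2 * B 1 1 * B 2 0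

def cub3 (A B : Matrix (Fin 3) (Fin 3) k) : k :=
  B 0 0 * B 1 1 * B 2 2 - B 0 0 * B 1 2 * B 2 1 - B 0 1 * B 1 0 * B 2 2 + B 0 1 * B 1 2 * B 2 0 + B 0 2 * B 1 0 * B 2 1 - B 0 2 * B 1 1 * B 2 0

lemma det_pencil (A B : Matrix (Fin 3) (Fin 3) k) (a b : k) :
    (a • A + b • B).det =
      cub0 A B * a ^ 3 + cub1 A B * a ^ 2 * b + cub2 A B * a * b ^ 2 + cub3 A B * b ^ 3 := by
  simp only [Matrix.det_fin_three, Matrix.add_apply, Matrix.smul_apply, smul_eq_mul,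
    cub0, cub1, cub2, cub3]
  ring

def cubPoly (A B : Matrix (Fin 3) (Fin 3) k) : Polynomial k :=
  Polynomial.C (cub3 A B) + Polynomial.C (cub2 A B) * Polynomial.X +
    Polynomial.C (cub1 A B) * Polynomial.X ^ 2 + Polynomial.C (cub0 A B) * Polynomial.X ^ 3

lemma cubPoly_eval (A B : Matrix (Fin 3) (Fin 3) k) (t : k) :
    (cubPoly A B).eval t = (t • A + (1:k) • B).det := by
  rw [det_pencil]
  simp [cubPoly]
  ring

lemma cubPoly_natDegree_le (A B : Matrix (Fin 3) (Fin 3) k) :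
    (cubPoly A B).natDegree ≤ 3 := by
  unfold cubPoly
  compute_degree

lemma cubPoly_coeffs (A B : Matrix (Fin 3) (Fin 3) k) :
    (cubPoly A B).coeff 0 = cub3 A B ∧ (cubPoly A B).coeff 1 = cub2 A B ∧
    (cubPoly A B).coeff 2 = cub1 A B ∧ (cubPoly A B).coeff 3 = cub0 A B := by
  refine ⟨?_, ?_, ?_, ?_⟩ <;>
  · simp [cubPoly, Polynomial.coeff_add, Polynomial.coeff_C_mul, Polynomial.coeff_X_pow,
      Polynomial.coeff_C]

end Aux

theorem stmt4 (k : Type*) [Field k] [IsAlgClosed k] (hchar : (2 : k) ≠ 0)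
    (Q Q' : MvPolynomial (Fin 4) k)
    (hQ : Q ∈ homogeneousSubmodule (Fin 4) k 2)
    (hQ' : Q' ∈ homogeneousSubmodule (Fin 4) k 2)
    (hind : LinearIndependent k ![Q, Q']) :
    (∀ p ∈ Submodule.span k {Q, Q'}, p ≠ 0 → HasRankLE k p 2) ∨
    ({W : Submodule k (MvPolynomial (Fin 4) k) |
        ∃ p ∈ Submodule.span k {Q, Q'}, p ≠ 0 ∧ W = Submodule.span k {p} ∧
          HasRankLE k p 2}.Finite ∧
      {W : Submodule k (MvPolynomial (Fin 4) k) |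
        ∃ p ∈ Submodule.span k {Q, Q'}, p ≠ 0 ∧ W = Submodule.span k {p} ∧
          HasRankLE k p 2}.ncard ≤ 3) := by
  classical
  set S : Set (Submodule k (MvPolynomial (Fin 4) k)) :=
    {W : Submodule k (MvPolynomial (Fin 4) k) |
        ∃ p ∈ Submodule.span k {Q, Q'}, p ≠ 0 ∧ W = Submodule.span k {p} ∧
          HasRankLE k p 2} with hSdef
  -- linear independence unpacked
  have hzero : ∀ a b : k, a • Q + b • Q' = 0 → a = 0 ∧ b = 0 := by
    intro a b hab
    have hz := Fintype.linearIndependent_iff.mp hind ![a, b] (by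
      simpa [Fin.sum_univ_two] using hab)
    exact ⟨hz 0, hz 1⟩
  by_cases hsub : S.Subsingleton
  · right
    refine ⟨hsub.finite, ?_⟩
    rcases hsub.eq_empty_or_singleton with h | ⟨x, h⟩ <;> simp [h]
  -- S has two distinct elements: extract symmetric representations of Q and Q'
  rw [Set.not_subsingleton_iff] at hsub
  obtain ⟨W1, hW1, W2, hW2, hW12⟩ := hsub
  obtain ⟨p1, hp1mem, hp1ne, hW1eq, M1, hM1symm, hp1rep, -⟩ := hW1
  obtain ⟨p2, hp2mem, hp2ne, hW2eq, M2, hM2symm, hp2rep, -⟩ := hW2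
  obtain ⟨a1, b1, hp1⟩ := Submodule.mem_span_pair.mp hp1mem
  obtain ⟨a2, b2, hp2⟩ := Submodule.mem_span_pair.mp hp2mem
  set δ : k := a1 * b2 - a2 * b1 with hδdef
  have hδ : δ ≠ 0 := by
    intro h0
    have hspan : Submodule.span k {p2} = Submodule.span k {p1} := by
      have h1 : ¬ (a1 = 0 ∧ b1 = 0) := by
        rintro ⟨rfl, rfl⟩
        simp at hp1
        exact hp1ne hp1.symm
      rcases Classical.em (a1 = 0) with rfl | ha1
      · -- then b1 ≠ 0 and δ = 0 gives a2 * b1 = 0, so a2 = 0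
        have hb1 : b1 ≠ 0 := fun hb => h1 ⟨rfl, hb⟩
        have ha2 : a2 = 0 := by
          have h0' : a2 * b1 = 0 := by
            have hx := h0
            rw [hδdef] at hx
            linear_combination -hx
          exact (mul_eq_zero.mp h0').resolve_right hb1
        -- p1 = b1 • Q', p2 = b2 • Q'
        have he1 : p1 = b1 • Q' := by rw [← hp1]; simp
        have he2 : p2 = (b2 * b1⁻¹) • p1 := by
          rw [← hp2, he1, ha2]
          simp [smul_smul, mul_assoc, inv_mul_cancel₀ hb1]
        rw [he2]
        have hb2 : b2 * b1⁻¹ ≠ 0 := by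
          intro h
          apply hp2ne
          rw [he2, h, zero_smul]
        exact Submodule.span_singleton_smul_eq (Ne.isUnit hb2) _
      · -- a1 ≠ 0 : p2 = (a2/a1) • p1
        have hkey : a1 * b2 = a2 * b1 := by
          have hx := h0
          rw [hδdef] at hx
          linear_combination hx
        have he2 : p2 = (a2 * a1⁻¹) • p1 := by
          rw [← hp2, ← hp1, smul_add, smul_smul, smul_smul]
          have e1 : a2 * a1⁻¹ * a1 = a2 := by field_simp
          have e2 : a2 * a1⁻¹ * b1 = b2 := by
            field_simp
            first
            | linear_combination hkey
            | linear_combination -hkey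
          rw [e1, e2]
        have hc : a2 * a1⁻¹ ≠ 0 := by
          intro h
          apply hp2ne
          rw [he2, h, zero_smul]
        rw [he2]
        exact Submodule.span_singleton_smul_eq (Ne.isUnit hc) _
    apply hW12
    rw [hW1eq, hW2eq, hspan]
  -- representations of Q and Q'
  have hQrep : δ • Q = b2 • p1 + (-b1) • p2 := by
    rw [← hp1, ← hp2]
    simp only [smul_add, smul_smul, neg_smul, neg_add_rev]
    rw [hδdef]
    module
  have hQ'rep : δ • Q' = a1 • p2 + (-a2) • p1 := by
    rw [← hp1, ← hp2]
    simp only [smul_add, smul_smul, neg_smul, neg_add_rev]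
    rw [hδdef]
    module
  obtain ⟨N, hNsymm, hQrepN⟩ :
      ∃ N : Matrix (Fin 4) (Fin 4) k, N.IsSymm ∧ Q = quadOfMat k N := by
    refine ⟨δ⁻¹ • (b2 • M1 + (-b1) • M2),
      (((hM1symm.smul b2).add (hM2symm.smul (-b1))).smul δ⁻¹), ?_⟩
    rw [quadOfMat_smul, quadOfMat_add, quadOfMat_smul, quadOfMat_smul,
      ← hp1rep, ← hp2rep, ← hQrep, smul_smul, inv_mul_cancel₀ hδ, one_smul]
  obtain ⟨N', hN'symm, hQ'repN⟩ :
      ∃ N' : Matrix (Fin 4) (Fin 4) k, N'.IsSymm ∧ Q' = quadOfMat k N' := by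
    refine ⟨δ⁻¹ • (a1 • M2 + (-a2) • M1),
      (((hM2symm.smul a1).add (hM1symm.smul (-a2))).smul δ⁻¹), ?_⟩
    rw [quadOfMat_smul, quadOfMat_add, quadOfMat_smul, quadOfMat_smul,
      ← hp2rep, ← hp1rep, ← hQ'rep, smul_smul, inv_mul_cancel₀ hδ, one_smul]
  -- the key rank criterion
  have key : ∀ (a b : k), (HasRankLE k (a • Q + b • Q') 2 ↔ (a • N + b • N').rank ≤ 2) := by
    intro a b
    have hrep : a • Q + b • Q' = quadOfMat k (a • N + b • N') := by
      rw [quadOfMat_add, quadOfMat_smul, quadOfMat_smul, ← hQrepN, ← hQ'repN]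
    have hsymm : (a • N + b • N').IsSymm := (hNsymm.smul a).add (hN'symm.smul b)
    constructor
    · rintro ⟨M, hMsymm, hMrep, hMrank⟩
      have : M = a • N + b • N' :=
        quadOfMat_inj hchar hMsymm hsymm (by rw [← hMrep, ← hrep])
      rwa [← this]
    · intro h
      exact ⟨a • N + b • N', hsymm, hrep, h⟩
  by_cases hall : ∀ p ∈ Submodule.span k {Q, Q'}, p ≠ 0 → HasRankLE k p 2
  · exact Or.inl hall
  right
  push_neg at hall
  obtain ⟨p0, hp0mem, hp0ne, hp0not⟩ := hall
  obtain ⟨a0, b0, hp0⟩ := Submodule.mem_span_pair.mp hp0mem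
  have hrank0 : 3 ≤ (a0 • N + b0 • N').rank := by
    by_contra h
    exact hp0not (hp0 ▸ (key a0 b0).mpr (by omega))
  obtain ⟨r, c, hminor⟩ := exists_minor hrank0
  set A : Matrix (Fin 3) (Fin 3) k := N.submatrix r c with hAdef
  set B : Matrix (Fin 3) (Fin 3) k := N'.submatrix r c with hBdef
  have hsubmx : ∀ a b : k, (a • N + b • N').submatrix r c = a • A + b • B := by
    intro a b
    ext i j
    simp [hAdef, hBdef, Matrix.submatrix_apply]
  have hg0 : (a0 • A + b0 • B).det ≠ 0 := by rw [← hsubmx]; exact hminor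
  -- every element of S gives a root of the cubic
  have key2 : ∀ W ∈ S, ∃ a b : k, ¬(a = 0 ∧ b = 0) ∧ W = Submodule.span k {a • Q + b • Q'} ∧
      (a • A + b • B).det = 0 := by
    intro W hW
    obtain ⟨p, hpmem, hpne, hWeq, hprk⟩ := hW
    obtain ⟨a, b, hp⟩ := Submodule.mem_span_pair.mp hpmem
    refine ⟨a, b, ?_, by rw [hWeq, hp], ?_⟩
    · rintro ⟨rfl, rfl⟩
      simp at hp
      exact hpne hp.symm
    · have hrk : (a • N + b • N').rank ≤ 2 := (key a b).mp (hp ▸ hprk)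
      rw [← hsubmx]
      exact minor_zero_of_rank_le hrk r c
  -- the root polynomial
  set P : Polynomial k := cubPoly A B with hPdef
  set T : Set k := {t : k | P.eval t = 0} with hTdef
  obtain ⟨hc30, hc20, hc10, hc00⟩ := cubPoly_coeffs A B
  -- roots t of P give elements of S of the form span {t Q + Q'}
  have himg : ∀ W ∈ S, (∃ a : k, a ≠ 0 ∧ W = Submodule.span k {Q} ∧ cub0 A B = 0) ∨
      W ∈ (fun t => Submodule.span k {t • Q + Q'}) '' T := by
    intro W hW
    obtain ⟨a, b, hab, hWeq, hdet⟩ := key2 W hW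
    rcases eq_or_ne b 0 with rfl | hb
    · left
      have ha : a ≠ 0 := fun h => hab ⟨h, rfl⟩
      refine ⟨a, ha, ?_, ?_⟩
      · rw [hWeq]
        simp only [zero_smul, add_zero]
        exact Submodule.span_singleton_smul_eq (Ne.isUnit ha) _
      · rw [det_pencil] at hdet
        have h3 : a ^ 3 ≠ 0 := pow_ne_zero 3 ha
        have hml : cub0 A B * a ^ 3 = 0 := by linear_combination hdet
        rcases mul_eq_zero.mp hml with h | h
        · exact h
        · exact absurd h h3
    · right
      refine ⟨a * b⁻¹, ?_, ?_⟩
      · rw [hTdef]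
        simp only [Set.mem_setOf_eq]
        rw [hPdef, cubPoly_eval]
        rw [det_pencil] at hdet ⊢
        have ha' : a = (a * b⁻¹) * b := by field_simp
        rw [ha'] at hdet
        have hb3 : (b : k) ^ 3 ≠ 0 := pow_ne_zero 3 hb
        have hfin : b ^ 3 * (cub0 A B * (a * b⁻¹) ^ 3 + cub1 A B * (a * b⁻¹) ^ 2 * 1 +
            cub2 A B * (a * b⁻¹) * 1 ^ 2 + cub3 A B * 1 ^ 3) = 0 := by
          linear_combination hdet
        have heq := (mul_eq_zero.mp hfin).resolve_left hb3
        linear_combination heq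
      · rw [hWeq]
        have : a • Q + b • Q' = b • ((a * b⁻¹) • Q + Q') := by
          rw [smul_add, smul_smul]
          congr 2
          field_simp
        rw [this]
        exact (Submodule.span_singleton_smul_eq (Ne.isUnit hb) _).symm
  by_cases hc0 : cub0 A B = 0
  · -- degree ≤ 2 case, also span{Q} may occur
    have hPne : P ≠ 0 := by
      intro h
      have h3 : cub3 A B = 0 := by rw [← hc30, ← hPdef, h]; simp
      have h2 : cub2 A B = 0 := by rw [← hc20, ← hPdef, h]; simp
      have h1 : cub1 A B = 0 := by rw [← hc10, ← hPdef, h]; simp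
      apply hg0
      rw [det_pencil, hc0, h1, h2, h3]
      ring
    have hdeg : P.natDegree ≤ 2 := by
      rw [hPdef]
      unfold cubPoly
      rw [hc0]
      simp only [map_zero, zero_mul, add_zero]
      compute_degree
    obtain ⟨hTfin, hTcard⟩ := roots_finite_card hPne hdeg
    rw [← hTdef] at hTfin hTcard
    have hSsub : S ⊆ insert (Submodule.span k {Q})
        ((fun t => Submodule.span k {t • Q + Q'}) '' T) := by
      intro W hW
      rcases himg W hW with ⟨a, ha, hWeq, -⟩ | h
      · exact Set.mem_insert_iff.mpr (Or.inl hWeq)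
      · exact Set.mem_insert_iff.mpr (Or.inr h)
    have hfin : S.Finite :=
      Set.Finite.subset ((hTfin.image _).insert _) hSsub
    refine ⟨hfin, ?_⟩
    calc S.ncard ≤ (insert (Submodule.span k {Q})
          ((fun t => Submodule.span k {t • Q + Q'}) '' T)).ncard :=
          Set.ncard_le_ncard hSsub ((hTfin.image _).insert _)
      _ ≤ ((fun t => Submodule.span k {t • Q + Q'}) '' T).ncard + 1 :=
          Set.ncard_insert_le _ _
      _ ≤ T.ncard + 1 := by
          have := Set.ncard_image_le (f := fun t => Submodule.span k {t • Q + Q'}) hTfin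
          omega
      _ ≤ 3 := by omega
  · have hPne : P ≠ 0 := by
      intro h
      apply hc0
      rw [← hc00, ← hPdef, h]
      simp
    have hdeg : P.natDegree ≤ 3 := cubPoly_natDegree_le A B
    obtain ⟨hTfin, hTcard⟩ := roots_finite_card hPne hdeg
    rw [← hTdef] at hTfin hTcard
    have hSsub : S ⊆ (fun t => Submodule.span k {t • Q + Q'}) '' T := by
      intro W hW
      rcases himg W hW with ⟨a, ha, hWeq, hc⟩ | h
      · exact absurd hc hc0
      · exact h
    have hfin : S.Finite := Set.Finite.subset (hTfin.image _) hSsub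
    refine ⟨hfin, ?_⟩
    calc S.ncard ≤ ((fun t => Submodule.span k {t • Q + Q'}) '' T).ncard :=
          Set.ncard_le_ncard hSsub (hTfin.image _)
      _ ≤ T.ncard := Set.ncard_image_le hTfin
      _ ≤ 3 := hTcard

end
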